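/- For n ≥ 2, the generalized MISR of the PPP is lower bounded by MISR_n ≥ [(δ/(1-δ))^n n! + δE(h^n)/(n-δ)]^{1/n}, with equality for n = 2. -/

import Mathlib

open Finset

/-- Incomplete (partial) Bell polynomials (cf. stmt 10). -/
noncomputable def Bell (x : ℕ → ℝ) : ℕ → ℕ → ℝ
  | 0, 0 => 1
  | 0, _ + 1 => 0
  | _ + 1, 0 => 0
  | n + 1, k + 1 =>
      ∑ i ∈ Finset.range (n + 1), (n.choose i : ℝ) * x (i + 1) * Bell x (n - i) k
  termination_by n _ => n
  decreasing_by simp_wf <;> omega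

lemma Bell_nonneg (x : ℕ → ℝ) (hx : ∀ j, 1 ≤ j → 0 ≤ x j) :
    ∀ n k, 0 ≤ Bell x n k := by
  intro n
  induction n using Nat.strong_induction_on with
  | _ n ih =>
    intro k
    match n, k with
    | 0, 0 => simp [Bell]
    | 0, k+1 => simp [Bell]
    | n+1, 0 => simp [Bell]
    | n+1, k+1 =>
      rw [Bell]
      refine Finset.sum_nonneg fun i hi => ?_
      exact mul_nonneg (mul_nonneg (by positivity) (hx (i+1) (by omega)))
        (ih (n - i) (by omega) k)

lemma Bell_zero_of_lt (x : ℕ → ℝ) : ∀ n k, n < k → Bell x n k = 0 := by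
  intro n
  induction n using Nat.strong_induction_on with
  | _ n ih =>
    intro k hk
    match n, k with
    | 0, k+1 => simp [Bell]
    | n+1, k+1 =>
      rw [Bell]
      refine Finset.sum_eq_zero fun i hi => ?_
      rw [ih (n - i) (by omega) k (by omega), mul_zero]

lemma Bell_one (x : ℕ → ℝ) : ∀ n, 1 ≤ n → Bell x n 1 = x n := by
  intro n
  induction n with
  | zero => omega
  | succ n ih =>
    intro _
    rw [Bell]
    rw [Finset.sum_eq_single n]
    · have h00 : Bell x 0 0 = 1 := by rw [Bell]
      simp [h00]
    · intro i hi hne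
      have : Bell x (n - i) 0 = 0 := by
        have h1 : n - i = (n - i - 1) + 1 := by
          simp at hi; omega
        rw [h1, Bell]
      simp [this]
    · intro h; simp at h

lemma Bell_diag (x : ℕ → ℝ) : ∀ n, Bell x n n = (x 1) ^ n := by
  intro n
  induction n with
  | zero => simp [Bell]
  | succ n ih =>
    rw [Bell]
    rw [Finset.sum_eq_single 0]
    · simp [ih, pow_succ, mul_comm]
    · intro i hi hne
      simp only [Finset.mem_range] at hi
      rw [Bell_zero_of_lt x (n - i) n (by omega), mul_zero]
    · intro h; simp at h

/-- For the PPP with fading moments μ_j = E(h^j) (μ₁ = 1), the generalized MISR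
MISR_n = (E(ISR^n))^{1/n} with E(ISR^n) = ∑_{k=1}^n k! B_{n,k}(δμ₁/(1-δ),…) is lower
bounded, for n ≥ 2, by [(δ/(1-δ))^n n! + δ E(h^n)/(n-δ)]^{1/n}, keeping only the k = n
and k = 1 terms; for n = 2 the bound holds with equality. -/
theorem stmt11 (δ : ℝ) (hδ : δ ∈ Set.Ioo (0 : ℝ) 1)
    (μ : ℕ → ℝ) (hμ : ∀ j, 0 ≤ μ j) (hμ1 : μ 1 = 1)
    (S : ℕ → ℝ)
    (hS : ∀ n, S n = ∑ k ∈ Finset.Icc 1 n, (k.factorial : ℝ) *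
        Bell (fun j => δ * μ j / ((j : ℝ) - δ)) n k)
    (n : ℕ) (hn : 2 ≤ n) :
    (S n) ^ ((1 : ℝ) / n) ≥
      ((δ / (1 - δ)) ^ n * n.factorial + δ * μ n / ((n : ℝ) - δ)) ^ ((1 : ℝ) / n)
    ∧ S 2 = (δ / (1 - δ)) ^ 2 * Nat.factorial 2 + δ * μ 2 / (2 - δ) := by
  obtain ⟨hδ0, hδ1⟩ := hδ
  set x : ℕ → ℝ := fun j => δ * μ j / ((j : ℝ) - δ) with hxdef
  have hx : ∀ j, 1 ≤ j → 0 ≤ x j := by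
    intro j hj
    have hjδ : (0:ℝ) < (j:ℝ) - δ := by
      have : (1:ℝ) ≤ (j:ℝ) := by exact_mod_cast hj
      linarith
    exact div_nonneg (mul_nonneg hδ0.le (hμ j)) hjδ.le
  have hx1 : x 1 = δ / (1 - δ) := by simp [hxdef, hμ1]
  constructor
  · apply Real.rpow_le_rpow
    · have h1 : 0 ≤ (δ / (1 - δ)) ^ n * n.factorial :=
        mul_nonneg (pow_nonneg (div_nonneg hδ0.le (by linarith)) n) (Nat.cast_nonneg _)
      have h2 : 0 ≤ x n := hx n (by omega)
      simpa [hxdef] using add_nonneg h1 h2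
    · rw [hS n]
      have hsub : ({1, n} : Finset ℕ) ⊆ Finset.Icc 1 n := by
        intro k hk
        simp at hk
        rcases hk with h | h <;> simp [h] <;> omega
      calc (δ / (1 - δ)) ^ n * n.factorial + δ * μ n / ((n : ℝ) - δ)
          = ∑ k ∈ ({1, n} : Finset ℕ), (k.factorial : ℝ) * Bell x n k := by
            rw [Finset.sum_pair (by omega)]
            rw [Bell_one x n (by omega), Bell_diag x n, hx1]
            simp [hxdef]; ring
        _ ≤ ∑ k ∈ Finset.Icc 1 n, (k.factorial : ℝ) * Bell x n k := by
            apply Finset.sum_le_sum_of_subset_of_nonneg hsub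
            intro k hk _
            exact mul_nonneg (Nat.cast_nonneg _) (Bell_nonneg x hx n k)
    · positivity
  · rw [hS 2]
    have : Finset.Icc 1 2 = ({1, 2} : Finset ℕ) := by decide
    rw [this, Finset.sum_pair (by omega)]
    rw [Bell_one x 2 (by omega), Bell_diag x 2, hx1]
    simp [hxdef]
    ring
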